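/- Let S be in the Schur class S_d(U,Y) (i.e., K_S(λ,ζ) = (I - S(λ)S(ζ)*)/(1-⟨λ,ζ⟩) is positive on 𝔹ᵈ), and suppose A₁,…,A_d are bounded operators on H(K_S) solving the Gleason problem: f(λ) - f(0) = Σⱼ λⱼ (Aⱼf)(λ) for all f ∈ H(K_S) and λ ∈ 𝔹ᵈ, which is contractive: Σⱼ ‖Aⱼf‖² ≤ ‖f‖² - ‖f(0)‖². Let C : H(K_S) → Y be evaluation at 0. Then f(λ) = C(I - Z(λ)A)⁻¹f for all f ∈ H(K_S) and λ ∈ 𝔹ᵈ. -/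

import Mathlib

open ContinuousLinearMap

/-- An (abstract) realization of the reproducing kernel Hilbert space of an
`L(V)`-valued positive kernel `k` on `Ω`. -/
structure AbstractRKHS (Ω : Type*) (V : Type*) [NormedAddCommGroup V] [InnerProductSpace ℂ V]
    (k : Ω → Ω → V →L[ℂ] V)
    (H : Type*) [NormedAddCommGroup H] [InnerProductSpace ℂ H] where
  toFun : H →ₗ[ℂ] (Ω → V)
  kElem : Ω → V → H
  kElem_apply : ∀ (ζ : Ω) (v : V) (l : Ω), toFun (kElem ζ v) l = k l ζ v
  reproducing : ∀ (f : H) (ζ : Ω) (v : V),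
    (inner ℂ (kElem ζ v) f : ℂ) = inner ℂ v (toFun f ζ)
  dense_span :
    (Submodule.span ℂ (Set.range fun p : Ω × V => kElem p.1 p.2)).topologicalClosure = ⊤

/-- If `S` is in the Schur class (its kernel `K_S(λ,ζ) = (I - S(λ)S(ζ)*)/(1-⟨λ,ζ⟩)`
is positive, with RKHS `H(K_S)`), `A₁,…,A_d` is a contractive solution of the
Gleason problem for `H(K_S)` and `C` is evaluation at `0`, then
`f(λ) = C (I - Z(λ)A)⁻¹ f` for every `f ∈ H(K_S)` and `λ` in the ball. -/
theorem stmt13 {d : ℕ}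
    {U Y : Type*}
    [NormedAddCommGroup U] [InnerProductSpace ℂ U] [CompleteSpace U]
    [NormedAddCommGroup Y] [InnerProductSpace ℂ Y] [CompleteSpace Y]
    (S : {l : EuclideanSpace ℂ (Fin d) // ‖l‖ < 1} → U →L[ℂ] Y)
    (K : {l : EuclideanSpace ℂ (Fin d) // ‖l‖ < 1} →
         {l : EuclideanSpace ℂ (Fin d) // ‖l‖ < 1} → Y →L[ℂ] Y)
    (hK : ∀ l z, (1 - ∑ j, l.1 j * (starRingEnd ℂ) (z.1 j)) • K l z =
      1 - S l ∘L adjoint (S z))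
    (hKpos : ∀ (n : ℕ) (ζ : Fin n → {l : EuclideanSpace ℂ (Fin d) // ‖l‖ < 1})
      (y : Fin n → Y),
      0 ≤ (∑ i, ∑ j, (inner ℂ (K (ζ i) (ζ j) (y j)) (y i) : ℂ)).re ∧
      (∑ i, ∑ j, (inner ℂ (K (ζ i) (ζ j) (y j)) (y i) : ℂ)).im = 0)
    {H : Type*} [NormedAddCommGroup H] [InnerProductSpace ℂ H] [CompleteSpace H]
    (r : AbstractRKHS {l : EuclideanSpace ℂ (Fin d) // ‖l‖ < 1} Y K H)
    (A : Fin d → H →L[ℂ] H)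
    (hGleason : ∀ (f : H) (l : {l : EuclideanSpace ℂ (Fin d) // ‖l‖ < 1}),
      r.toFun f l - r.toFun f ⟨0, by simp⟩ = ∑ j, l.1 j • r.toFun (A j f) l)
    (hContr : ∀ f : H,
      ∑ j, ‖A j f‖ ^ 2 ≤ ‖f‖ ^ 2 - ‖r.toFun f ⟨0, by simp⟩‖ ^ 2)
    (Cop : H →L[ℂ] Y)
    (hC : ∀ f : H, Cop f = r.toFun f ⟨0, by simp⟩) :
    ∀ (f : H) (l : {l : EuclideanSpace ℂ (Fin d) // ‖l‖ < 1}),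
      r.toFun f l = Cop (Ring.inverse (1 - ∑ j, l.1 j • A j) f) := by

  intro f l
  set T : H →L[ℂ] H := ∑ j, l.1 j • A j with hTdef
  have hTapp : ∀ g : H, T g = ∑ j, l.1 j • A j g := by
    intro g; simp [hTdef, ContinuousLinearMap.sum_apply]
  have hnorm : ‖T‖ < 1 := by
    have hb : ∀ g : H, ‖T g‖ ≤ ‖l.1‖ * ‖g‖ := by
      intro g
      have h1 : ‖T g‖ ≤ ∑ j, ‖l.1 j‖ * ‖A j g‖ := by
        rw [hTapp]
        refine (norm_sum_le _ _).trans_eq ?_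
        simp [norm_smul]
      have h2 : ∑ j, ‖l.1 j‖ * ‖A j g‖ ≤
          Real.sqrt (∑ j, ‖l.1 j‖ ^ 2) * Real.sqrt (∑ j, ‖A j g‖ ^ 2) :=
        Real.sum_mul_le_sqrt_mul_sqrt _ _ _
      have h3 : Real.sqrt (∑ j, ‖l.1 j‖ ^ 2) = ‖l.1‖ := by
        rw [EuclideanSpace.norm_eq]
      have h4 : Real.sqrt (∑ j, ‖A j g‖ ^ 2) ≤ ‖g‖ := by
        have := hContr g
        have h5 : ∑ j, ‖A j g‖ ^ 2 ≤ ‖g‖ ^ 2 := by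
          have : (0:ℝ) ≤ ‖r.toFun g ⟨0, by simp⟩‖ ^ 2 := by positivity
          linarith [hContr g]
        calc Real.sqrt (∑ j, ‖A j g‖ ^ 2) ≤ Real.sqrt (‖g‖ ^ 2) :=
              Real.sqrt_le_sqrt h5
          _ = ‖g‖ := by rw [Real.sqrt_sq (norm_nonneg g)]
      calc ‖T g‖ ≤ ∑ j, ‖l.1 j‖ * ‖A j g‖ := h1
        _ ≤ Real.sqrt (∑ j, ‖l.1 j‖ ^ 2) * Real.sqrt (∑ j, ‖A j g‖ ^ 2) := h2
        _ ≤ ‖l.1‖ * ‖g‖ := by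
            rw [h3]
            exact mul_le_mul_of_nonneg_left h4 (norm_nonneg _)
    calc ‖T‖ ≤ ‖l.1‖ := ContinuousLinearMap.opNorm_le_bound _ (norm_nonneg _) hb
      _ < 1 := l.2
  set u : (H →L[ℂ] H)ˣ := Units.oneSub T hnorm with hu
  set g : H := (↑u⁻¹ : H →L[ℂ] H) f with hg
  have hfg : f = g - T g := by
    have h1 : (↑u : H →L[ℂ] H) ((↑u⁻¹ : H →L[ℂ] H) f) = f := by
      have : (↑u : H →L[ℂ] H) ∘L (↑u⁻¹ : H →L[ℂ] H) = 1 := by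
        rw [← ContinuousLinearMap.mul_def, ← Units.val_mul, mul_inv_cancel, Units.val_one]
      calc (↑u : H →L[ℂ] H) ((↑u⁻¹ : H →L[ℂ] H) f)
          = ((↑u : H →L[ℂ] H) ∘L (↑u⁻¹ : H →L[ℂ] H)) f := rfl
        _ = f := by rw [this]; rfl
    have h2 : (↑u : H →L[ℂ] H) = 1 - T := rfl
    rw [h2] at h1
    simpa using h1.symm
  have hinv : Ring.inverse (1 - T) = (↑u⁻¹ : H →L[ℂ] H) := by
    have : (1 - T) = (↑u : H →L[ℂ] H) := rfl
    rw [this, Ring.inverse_unit]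
  have hTg : r.toFun (T g) l = ∑ j, l.1 j • r.toFun (A j g) l := by
    rw [hTapp, map_sum]
    simp [map_smul]
  have key : r.toFun f l = r.toFun g ⟨0, by simp⟩ := by
    rw [hfg, map_sub]
    have hG := hGleason g l
    simp only [Pi.sub_apply]
    rw [hTg]
    linear_combination (norm := module) hG
  rw [key, ← hC g, hg, ← hinv, hTdef]
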